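/- Fix p ≥ 0. For independent random variables Y_i = i^{−p} μ_i + n^{−1/2} Z_i with Z_i standard normal, consider M_n(α) = ∑_{i=1}^∞ n (log i)/(i^{1+2α+2p} + n) − ∑_{i=1}^∞ n² i^{1+2α+2p} (log i) Y_i² / (i^{1+2α+2p} + n)². Then the variance of (1+2α+2p) M_n(α) / n^{1/(1+2α+2p)} is bounded above by a universal constant times n^{−1/(1+2α+2p)} (log n)² (1 + h_n(α)), uniformly in α > 0 and in the sequence μ ∈ ℓ². -/

import Mathlib

open Real Finset

lemma aux_bern {x s : ℝ} (hx : 1 ≤ x) (hs : 1 < s) :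
    (s - 1) * (x+1) ^ (-s) ≤ x ^ (1-s) - (x+1) ^ (1-s) := by
  have hx0 : (0:ℝ) < x := by linarith
  have hx10 : (0:ℝ) < x + 1 := by linarith
  set q := s - 1 with hq
  have hq0 : 0 < q := by simp only [hq]; linarith
  set u := 1/(x+1) with hu
  have hu0 : 0 < u := by positivity
  have hu1 : u < 1 := by rw [hu, div_lt_one hx10]; linarith
  set a := x/(x+1) with ha
  have ha0 : 0 < a := by positivity
  have hau : a = 1 - u := by rw [ha, hu]; field_simp; ring
  have key : (1 + q*u) * a ^ q ≤ 1 := by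
    have h1 : a ≤ exp (-u) := by
      rw [hau]; have := Real.add_one_le_exp (-u); linarith
    have h2 : a ^ q ≤ exp (-u) ^ q := Real.rpow_le_rpow ha0.le h1 hq0.le
    have h3 : exp (-u) ^ q = exp (-(q*u)) := by rw [← Real.exp_mul]; ring_nf
    have h5 : 1 + q*u ≤ exp (q*u) := by have := Real.add_one_le_exp (q*u); linarith
    have h6 : (0:ℝ) < exp (-(q*u)) := Real.exp_pos _
    calc (1 + q*u) * a ^ q ≤ (1 + q*u) * exp (-(q*u)) := by
          rw [← h3]; exact mul_le_mul_of_nonneg_left h2 (by positivity)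
      _ ≤ exp (q*u) * exp (-(q*u)) := mul_le_mul_of_nonneg_right h5 h6.le
      _ = 1 := by rw [← Real.exp_add]; simp
  have haq0 : 0 < a ^ q := Real.rpow_pos_of_pos ha0 q
  have key2 : 1 + q*u ≤ a ^ (-q) := by
    rw [Real.rpow_neg ha0.le, ← one_div, le_div_iff₀ haq0]
    exact key
  -- rewrite goal
  have e1 : x ^ (1-s) = a ^ (-q) * (x+1) ^ (-q) := by
    have hxa : x = a * (x+1) := by rw [ha]; field_simp
    have h1s : (1 - s) = -q := by rw [hq]; ring
    rw [h1s]
    nth_rewrite 1 [hxa]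
    rw [Real.mul_rpow ha0.le hx10.le]
  have e2 : (x+1) ^ (-s) = (x+1) ^ (-q) * u := by
    have : (-s) = -q + (-1) := by rw [hq]; ring
    rw [this, Real.rpow_add hx10, Real.rpow_neg_one, hu, one_div]
  have e3 : (x+1) ^ (1-s) = (x+1) ^ (-q) := by
    congr 1; rw [hq]; ring
  rw [e1, e2, e3]
  have hxq0 : 0 < (x+1) ^ (-q) := Real.rpow_pos_of_pos hx10 _
  nlinarith [mul_le_mul_of_nonneg_left key2 hxq0.le]

lemma aux_tail_Icc' {s : ℝ} (hs : 1 < s) (K : ℕ) (hK : 1 ≤ K) (B : ℕ) :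
    ∑ j ∈ Finset.Icc (K+1) B, ((j:ℝ))^(-s)
      ≤ ((K:ℝ)^(1-s) - ((max K B : ℕ):ℝ)^(1-s))/(s-1) := by
  have hK0 : (0:ℝ) < K := by exact_mod_cast hK
  have hs1 : 0 < s - 1 := by linarith
  induction B with
  | zero =>
      rw [Finset.Icc_eq_empty (by omega)]
      simp [Nat.max_eq_left (by omega : 0 ≤ K)]
  | succ B ih =>
      by_cases hB : K ≤ B
      · have hmax : max K B = B := Nat.max_eq_right hB
        have hmax2 : max K (B+1) = B+1 := Nat.max_eq_right (by omega)
        have hins : Finset.Icc (K+1) (B+1) = insert (B+1) (Finset.Icc (K+1) B) :=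
          (Finset.insert_Icc_right_eq_Icc_add_one (by omega)).symm
        rw [hins, Finset.sum_insert (by simp), hmax2]
        rw [hmax] at ih
        have hB1 : (1:ℝ) ≤ (B:ℝ) := by exact_mod_cast le_trans hK hB
        have hb := aux_bern hB1 hs
        have hcast : ((B:ℝ)+1) = (((B+1:ℕ)):ℝ) := by push_cast; ring
        rw [hcast] at hb
        have : (((B+1:ℕ)):ℝ)^(-s) ≤ ((B:ℝ)^(1-s) - (((B+1:ℕ)):ℝ)^(1-s))/(s-1) := by
          rw [le_div_iff₀ hs1]; linarith
        calc (((B+1:ℕ)):ℝ)^(-s) + ∑ j ∈ Finset.Icc (K+1) B, ((j:ℝ))^(-s)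
            ≤ ((B:ℝ)^(1-s) - (((B+1:ℕ)):ℝ)^(1-s))/(s-1)
              + ((K:ℝ)^(1-s) - ((B:ℕ):ℝ)^(1-s))/(s-1) := by
              exact add_le_add this ih
          _ = ((K:ℝ)^(1-s) - (((B+1:ℕ)):ℝ)^(1-s))/(s-1) := by ring
      · rw [Finset.Icc_eq_empty (by omega)]
        have hmax2 : max K (B+1) = K := Nat.max_eq_left (by omega)
        rw [hmax2]
        simp

lemma aux_tail_Icc {s : ℝ} (hs : 1 < s) (K : ℕ) (hK : 1 ≤ K) (B : ℕ) :
    ∑ j ∈ Finset.Icc (K+1) B, ((j:ℝ))^(-s) ≤ (K:ℝ)^(1-s)/(s-1) := by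
  refine le_trans (aux_tail_Icc' hs K hK B) ?_
  have hs1 : 0 < s - 1 := by linarith
  have h0 : (0:ℝ) ≤ ((max K B : ℕ):ℝ)^(1-s) := by positivity
  apply div_le_div_of_nonneg_right (by linarith) hs1.le

lemma aux_exp2_lt8 : Real.exp 2 ≤ 8 := by
  have h := Real.exp_one_lt_d9
  have : Real.exp 2 = Real.exp 1 * Real.exp 1 := by
    rw [← Real.exp_add]; norm_num
  nlinarith [Real.exp_pos 1]

lemma aux_tail_T_tele {s : ℝ} (hs : 1 < s) {K : ℕ} (hK : 1 ≤ K) (hsK : s ≤ (K:ℝ)+1)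
    (T : Finset ℕ) (hT : ∀ j ∈ T, K+1 ≤ j) :
    ∑ j ∈ T, ((j:ℝ))^(-s) ≤ 8 * ((K:ℝ)+1)^(-s) * ((K:ℝ)/(s-1)) := by
  have hK0 : (0:ℝ) < K := by exact_mod_cast hK
  have hs1 : 0 < s - 1 := by linarith
  have hsub : T ⊆ Finset.Icc (K+1) (T.sup id) := by
    intro j hj
    rw [Finset.mem_Icc]
    exact ⟨hT j hj, Finset.le_sup (f := id) hj⟩
  have h1 : ∑ j ∈ T, ((j:ℝ))^(-s) ≤ ∑ j ∈ Finset.Icc (K+1) (T.sup id), ((j:ℝ))^(-s) :=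
    Finset.sum_le_sum_of_subset_of_nonneg hsub (fun j _ _ => by positivity)
  have h2 := aux_tail_Icc hs K hK (T.sup id)
  have hr : (((K:ℝ)+1)/K)^s ≤ 8 := by
    have hpos : (0:ℝ) < ((K:ℝ)+1)/K := by positivity
    rw [Real.rpow_def_of_pos hpos]
    have hlog : Real.log (((K:ℝ)+1)/K) ≤ 1/K := by
      have h5 := Real.log_le_sub_one_of_pos hpos
      have h6 : ((K:ℝ)+1)/K - 1 = 1/K := by field_simp; ring
      linarith
    have hl0 : 0 ≤ Real.log (((K:ℝ)+1)/K) :=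
      Real.log_nonneg (by rw [le_div_iff₀ hK0]; linarith)
    have h7 : Real.log (((K:ℝ)+1)/K) * s ≤ 2 := by
      calc Real.log (((K:ℝ)+1)/K) * s ≤ (1/K) * s := by
            apply mul_le_mul_of_nonneg_right hlog (by linarith)
        _ ≤ (1/K) * ((K:ℝ)+1) := by
            apply mul_le_mul_of_nonneg_left hsK (by positivity)
        _ = 1 + 1/K := by field_simp
        _ ≤ 2 := by
            have : 1/(K:ℝ) ≤ 1 := by rw [div_le_one hK0]; exact_mod_cast hK
            linarith
    exact le_trans (Real.exp_le_exp.mpr h7) aux_exp2_lt8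
  have h3 : (K:ℝ)^(1-s) ≤ 8 * ((K:ℝ)+1)^(-s) * K := by
    have e1 : (K:ℝ)^(1-s) = (K:ℝ) * (K:ℝ)^(-s) := by
      rw [show (1-s) = 1 + (-s) by ring, Real.rpow_add hK0, Real.rpow_one]
    have e2 : (K:ℝ)^(-s) = ((K:ℝ)+1)^(-s) * (((K:ℝ)+1)/K)^s := by
      calc (K:ℝ)^(-s) = (((K:ℝ)+1)^(-s) * ((K:ℝ)+1)^s) * (K:ℝ)^(-s) := by
            rw [← Real.rpow_add (by positivity : (0:ℝ) < (K:ℝ)+1), neg_add_cancel,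
              Real.rpow_zero, one_mul]
        _ = ((K:ℝ)+1)^(-s) * (((K:ℝ)+1)^s * (K:ℝ)^(-s)) := by ring
        _ = ((K:ℝ)+1)^(-s) * (((K:ℝ)+1)/K)^s := by
            rw [Real.div_rpow (by positivity) hK0.le, Real.rpow_neg hK0.le, div_eq_mul_inv]
    have hp1 : (0:ℝ) < ((K:ℝ)+1)^(-s) := Real.rpow_pos_of_pos (by positivity) _
    calc (K:ℝ)^(1-s) = (K:ℝ) * (((K:ℝ)+1)^(-s) * (((K:ℝ)+1)/K)^s) := by rw [e1, e2]
      _ ≤ (K:ℝ) * (((K:ℝ)+1)^(-s) * 8) := by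
          apply mul_le_mul_of_nonneg_left _ hK0.le
          exact mul_le_mul_of_nonneg_left hr hp1.le
      _ = 8 * ((K:ℝ)+1)^(-s) * K := by ring
  calc ∑ j ∈ T, ((j:ℝ))^(-s) ≤ (K:ℝ)^(1-s)/(s-1) := le_trans h1 h2
    _ ≤ (8 * ((K:ℝ)+1)^(-s) * K)/(s-1) := by
        exact div_le_div_of_nonneg_right h3 hs1.le
    _ = 8 * ((K:ℝ)+1)^(-s) * ((K:ℝ)/(s-1)) := by ring

lemma aux_tail_T {s : ℝ} (hs : 1 < s) {K : ℕ} (hK : 1 ≤ K) (T : Finset ℕ)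
    (hT : ∀ j ∈ T, K+1 ≤ j) :
    ∑ j ∈ T, ((j:ℝ))^(-s) ≤ 8 * ((K:ℝ)+1)^(-s) * (1 + (K:ℝ)/(s-1)) := by
  have hK0 : (0:ℝ) < K := by exact_mod_cast hK
  have hs1 : 0 < s - 1 := by linarith
  have hp1 : (0:ℝ) < ((K:ℝ)+1)^(-s) := Real.rpow_pos_of_pos (by positivity) _
  by_cases hcase : s ≤ (K:ℝ)+1
  · refine le_trans (aux_tail_T_tele hs hK hcase T hT) ?_
    have : (K:ℝ)/(s-1) ≤ 1 + (K:ℝ)/(s-1) := by linarith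
    nlinarith
  · push_neg at hcase
    have hK1 : (1:ℝ) < (K:ℝ)+1 := by linarith
    have step : ∀ j ∈ T, ((j:ℝ))^(-s) ≤ ((K:ℝ)+1)^(((K:ℝ)+1)-s) * ((j:ℝ))^(-((K:ℝ)+1)) := by
      intro j hj
      have hjK : ((K:ℝ)+1) ≤ (j:ℝ) := by exact_mod_cast hT j hj
      have hj0 : (0:ℝ) < (j:ℝ) := by linarith
      have e : ((j:ℝ))^(-s) = ((j:ℝ))^(((K:ℝ)+1)-s) * ((j:ℝ))^(-((K:ℝ)+1)) := by
        rw [← Real.rpow_add hj0]; ring_nf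
      rw [e]
      apply mul_le_mul_of_nonneg_right _ (by positivity)
      exact Real.rpow_le_rpow_of_nonpos (by positivity) hjK (by linarith)
    calc ∑ j ∈ T, ((j:ℝ))^(-s)
        ≤ ∑ j ∈ T, ((K:ℝ)+1)^(((K:ℝ)+1)-s) * ((j:ℝ))^(-((K:ℝ)+1)) :=
          Finset.sum_le_sum step
      _ = ((K:ℝ)+1)^(((K:ℝ)+1)-s) * ∑ j ∈ T, ((j:ℝ))^(-((K:ℝ)+1)) := by
          rw [Finset.mul_sum]
      _ ≤ ((K:ℝ)+1)^(((K:ℝ)+1)-s) * (8 * ((K:ℝ)+1)^(-((K:ℝ)+1)) * ((K:ℝ)/(((K:ℝ)+1)-1))) := by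
          apply mul_le_mul_of_nonneg_left _ (by positivity)
          exact aux_tail_T_tele (by exact_mod_cast hK1) hK (le_refl _) T hT
      _ = 8 * (((K:ℝ)+1)^(((K:ℝ)+1)-s) * ((K:ℝ)+1)^(-((K:ℝ)+1))) := by
          rw [show ((K:ℝ)+1-1) = K by ring, div_self hK0.ne']
          ring
      _ = 8 * ((K:ℝ)+1)^(-s) := by
          rw [← Real.rpow_add (by positivity : (0:ℝ) < (K:ℝ)+1)]
          ring_nf
      _ ≤ 8 * ((K:ℝ)+1)^(-s) * (1 + (K:ℝ)/(s-1)) := by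
          nlinarith [div_nonneg hK0.le hs1.le]

-- (log u)^2 ≤ u^(2δ)/δ² for u ≥ 1, δ > 0
lemma aux_log_sq {u δ : ℝ} (hu : 1 ≤ u) (hδ : 0 < δ) :
    (Real.log u)^2 ≤ u^(2*δ)/δ^2 := by
  have hu0 : (0:ℝ) < u := by linarith
  have h1 : Real.log u ≤ u^δ/δ := by
    have h2 : δ * Real.log u = Real.log (u^δ) := (Real.log_rpow hu0 δ).symm
    have h3 : Real.log (u^δ) ≤ u^δ - 1 := Real.log_le_sub_one_of_pos (by positivity)
    have h4 : δ * Real.log u ≤ u^δ := by rw [h2]; linarith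
    rw [le_div_iff₀ hδ]; linarith [h4]
  have hl0 : 0 ≤ Real.log u := Real.log_nonneg hu
  have h5 : (Real.log u)^2 ≤ (u^δ/δ)^2 := by
    apply sq_le_sq' _ h1
    nlinarith [Real.rpow_pos_of_pos hu0 δ, div_pos (Real.rpow_pos_of_pos hu0 δ) hδ]
  refine h5.trans_eq ?_
  rw [div_pow, ← Real.rpow_natCast (u^δ) 2, ← Real.rpow_mul hu0.le]
  norm_num
  ring_nf

-- log x / x antitone
lemma aux_logdiv {x y : ℝ} (hx : Real.exp 1 ≤ x) (hxy : x ≤ y) :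
    Real.log y / y ≤ Real.log x / x :=
  Real.log_div_self_antitoneOn hx (le_trans hx hxy) hxy

-- Claim B : pointwise bound a_j ≤ 2 n log n / β
lemma claimB {n β : ℝ} (hn : 3 ≤ n) (hβ : 1 < β) {j : ℝ} (hj : 1 ≤ j) :
    n^2 * j^β * Real.log j / ((j^β + n)^2) ≤ 2 * n * Real.log n / β := by
  have hn0 : (0:ℝ) < n := by linarith
  have hj0 : (0:ℝ) < j := by linarith
  have hβ0 : (0:ℝ) < β := by linarith
  have hlogn : (1:ℝ) ≤ Real.log n := by
    rw [Real.le_log_iff_exp_le hn0]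
    calc Real.exp 1 ≤ 2.7182818286 := Real.exp_one_lt_d9.le
      _ ≤ n := by linarith
  set t := j^β with htd
  have ht1 : (1:ℝ) ≤ t := Real.one_le_rpow hj hβ0.le
  have ht0 : (0:ℝ) < t := by linarith
  have hlt : Real.log t = β * Real.log j := Real.log_rpow hj0 β
  have hlj0 : 0 ≤ Real.log j := Real.log_nonneg hj
  have hden : (0:ℝ) < (t+n)^2 := by positivity
  by_cases hcase : t ≤ n^2
  · -- a = log j * (n² t/(t+n)²) ≤ (2 log n/β)·(n/4)
    have h1 : n^2 * t / (t+n)^2 ≤ n/4 := by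
      rw [div_le_div_iff₀ hden (by norm_num)]
      nlinarith [sq_nonneg (t - n), sq_nonneg (t+n)]
    have h2 : Real.log j ≤ 2 * Real.log n / β := by
      rw [le_div_iff₀ hβ0]
      have : Real.log t ≤ Real.log (n^2) := Real.log_le_log ht0 hcase
      rw [Real.log_pow] at this
      push_cast at this
      rw [hlt] at this
      linarith
    calc n^2 * t * Real.log j / ((t+n)^2)
        = (n^2 * t / (t+n)^2) * Real.log j := by ring
      _ ≤ (n/4) * (2 * Real.log n / β) := by
          apply mul_le_mul h1 h2 hlj0
          positivity
      _ = (n * Real.log n / 2) / β := by ring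
      _ ≤ (2 * n * Real.log n) / β := by
          apply div_le_div_of_nonneg_right _ hβ0.le
          nlinarith
  · push_neg at hcase
    have he : Real.exp 1 ≤ n^2 := by
      nlinarith [Real.exp_one_lt_d9.le]
    have h3 : Real.log t / t ≤ Real.log (n^2) / (n^2) := aux_logdiv he hcase.le
    have h4 : Real.log (n^2) = 2 * Real.log n := by
      rw [Real.log_pow]; push_cast; ring
    calc n^2 * t * Real.log j / ((t+n)^2)
        ≤ n^2 * t * Real.log j / (t^2) := by
          apply div_le_div_of_nonneg_left (by positivity) (by positivity)
          nlinarith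
      _ = (n^2 / β) * (Real.log t / t) := by
          rw [hlt]; field_simp
      _ ≤ (n^2 / β) * (2 * Real.log n / n^2) := by
          apply mul_le_mul_of_nonneg_left _ (by positivity)
          rw [h4] at h3; exact h3
      _ = 2 * Real.log n / β := by
          field_simp
      _ ≤ 2 * n * Real.log n / β := by
          apply div_le_div_of_nonneg_right _ hβ0.le
          nlinarith

set_option maxHeartbeats 1000000 in
lemma claimA {n β : ℝ} (hn : 3 ≤ n) (hβ : 1 < β) (S : Finset ℕ) :
    ∑ i ∈ S, (n^2 * ((i:ℝ)+1)^β * Real.log ((i:ℝ)+1) / ((((i:ℝ)+1)^β + n)^2))^2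
      ≤ 801 * n^2 * n^(1/β) * (Real.log n)^2 / β^2 := by
  classical
  have hn0 : (0:ℝ) < n := by linarith
  have hβ0 : (0:ℝ) < β := by linarith
  have hlogn : (1:ℝ) ≤ Real.log n := by
    rw [Real.le_log_iff_exp_le hn0]
    calc Real.exp 1 ≤ 2.7182818286 := Real.exp_one_lt_d9.le
      _ ≤ n := by linarith
  set M := n^(1/β) with hMd
  have hM1 : (1:ℝ) ≤ M := Real.one_le_rpow (by linarith) (by positivity)
  have hM0 : (0:ℝ) < M := by linarith
  have hMn : M^β = n := by
    rw [hMd, ← Real.rpow_mul hn0.le, one_div, inv_mul_cancel₀ (by positivity), Real.rpow_one]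
  have hlogM : Real.log M = Real.log n / β := by
    rw [hMd, Real.log_rpow hn0, one_div, inv_mul_eq_div]
  set K := ⌊M⌋₊ with hKd
  have hK1 : 1 ≤ K := Nat.le_floor (by exact_mod_cast hM1)
  have hKM : (K:ℝ) ≤ M := Nat.floor_le hM0.le
  have hMK : M < (K:ℝ)+1 := by exact_mod_cast Nat.lt_floor_add_one M
  have hMinv : M^(-(2*β)) = (n^2)⁻¹ := by
    rw [show -(2*β) = β * (-2) by ring, Real.rpow_mul hM0.le, hMn,
      Real.rpow_neg hn0.le, show ((2:ℝ)) = ((2:ℕ):ℝ) by norm_num, Real.rpow_natCast]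
  -- the summand
  set g : ℕ → ℝ := fun i =>
    (n^2 * ((i:ℝ)+1)^β * Real.log ((i:ℝ)+1) / ((((i:ℝ)+1)^β + n)^2))^2 with hgd
  have hg0 : ∀ i, 0 ≤ g i := fun i => sq_nonneg _
  -- generic facts about j = i+1
  have hjfacts : ∀ i : ℕ, (1:ℝ) ≤ (i:ℝ)+1 := fun i => by
    have : (0:ℝ) ≤ (i:ℝ) := Nat.cast_nonneg i
    linarith
  -- split
  rw [← Finset.sum_filter_add_sum_filter_not S (fun i : ℕ => ((i:ℝ)+1) ≤ M)]
  have lower : ∑ i ∈ S.filter (fun i : ℕ => ((i:ℝ)+1) ≤ M), g i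
      ≤ M * (n^2 * (Real.log n)^2 / β^2) := by
    have hbd : ∀ i ∈ S.filter (fun i : ℕ => ((i:ℝ)+1) ≤ M),
        g i ≤ n^2 * (Real.log n)^2 / β^2 := by
      intro i hi
      rw [Finset.mem_filter] at hi
      have hjM : ((i:ℝ)+1) ≤ M := hi.2
      have hj1 : (1:ℝ) ≤ (i:ℝ)+1 := hjfacts i
      have hj0 : (0:ℝ) < (i:ℝ)+1 := by linarith
      have hden : n^2 ≤ (((i:ℝ)+1)^β + n)^2 := by
        have h1 : (0:ℝ) ≤ ((i:ℝ)+1)^β := by positivity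
        nlinarith
      have ha1 : n^2 * ((i:ℝ)+1)^β * Real.log ((i:ℝ)+1) / ((((i:ℝ)+1)^β + n)^2)
          ≤ ((i:ℝ)+1)^β * Real.log ((i:ℝ)+1) := by
        rw [div_le_iff₀ (by positivity)]
        have hl0 : 0 ≤ Real.log ((i:ℝ)+1) := Real.log_nonneg hj1
        have hkey := mul_le_mul_of_nonneg_left hden
          (mul_nonneg (Real.rpow_nonneg hj0.le β) hl0)
        nlinarith [hkey]
      have ha2 : ((i:ℝ)+1)^β ≤ n := by
        calc ((i:ℝ)+1)^β ≤ M^β := Real.rpow_le_rpow hj0.le hjM hβ0.le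
          _ = n := hMn
      have ha3 : Real.log ((i:ℝ)+1) ≤ Real.log n / β := by
        rw [← hlogM]
        exact Real.log_le_log hj0 hjM
      have ha0 : 0 ≤ n^2 * ((i:ℝ)+1)^β * Real.log ((i:ℝ)+1) / ((((i:ℝ)+1)^β + n)^2) := by
        have := Real.log_nonneg hj1
        positivity
      have hfin : n^2 * ((i:ℝ)+1)^β * Real.log ((i:ℝ)+1) / ((((i:ℝ)+1)^β + n)^2)
          ≤ n * (Real.log n / β) := by
        refine le_trans ha1 ?_
        have hl0 : 0 ≤ Real.log ((i:ℝ)+1) := Real.log_nonneg hj1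
        apply mul_le_mul ha2 ha3 hl0 hn0.le
      calc g i ≤ (n * (Real.log n / β))^2 := by
            rw [hgd]
            exact pow_le_pow_left₀ ha0 hfin 2
        _ = n^2 * (Real.log n)^2 / β^2 := by ring
    calc ∑ i ∈ S.filter (fun i : ℕ => ((i:ℝ)+1) ≤ M), g i
        ≤ (S.filter (fun i : ℕ => ((i:ℝ)+1) ≤ M)).card • (n^2 * (Real.log n)^2 / β^2) :=
          Finset.sum_le_card_nsmul _ _ _ hbd
      _ = ((S.filter (fun i : ℕ => ((i:ℝ)+1) ≤ M)).card : ℝ) * (n^2 * (Real.log n)^2 / β^2) := by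
          rw [nsmul_eq_mul]
      _ ≤ M * (n^2 * (Real.log n)^2 / β^2) := by
          apply mul_le_mul_of_nonneg_right _ (by positivity)
          have hsub : S.filter (fun i : ℕ => ((i:ℝ)+1) ≤ M) ⊆ Finset.range K := by
            intro i hi
            rw [Finset.mem_filter] at hi
            rw [Finset.mem_range]
            have : (((i+1:ℕ)):ℝ) ≤ M := by push_cast; linarith [hi.2]
            have := Nat.le_floor this
            omega
          calc ((S.filter (fun i : ℕ => ((i:ℝ)+1) ≤ M)).card : ℝ)
              ≤ ((Finset.range K).card : ℝ) := by
                exact_mod_cast Finset.card_le_card hsub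
            _ = (K:ℝ) := by rw [Finset.card_range]
            _ ≤ M := hKM
  have upper : ∑ i ∈ S.filter (fun i : ℕ => ¬((i:ℝ)+1) ≤ M), g i
      ≤ 800 * (M * (n^2 * (Real.log n)^2 / β^2)) := by
    set c2 : ℝ := 32*n^4/(β^2 * M^(β/2)) with hc2d
    have hc20 : 0 ≤ c2 := by positivity
    have hpt : ∀ i ∈ S.filter (fun i : ℕ => ¬((i:ℝ)+1) ≤ M),
        g i ≤ 2*n^4*(Real.log M)^2 * ((i:ℝ)+1)^(-(2*β)) + c2 * ((i:ℝ)+1)^(-(3*β/2)) := by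
      intro i hi
      rw [Finset.mem_filter] at hi
      have hjM : M < (i:ℝ)+1 := by
        have := hi.2
        push_neg at this
        exact this
      have hj1 : (1:ℝ) ≤ (i:ℝ)+1 := hjfacts i
      have hj0 : (0:ℝ) < (i:ℝ)+1 := by linarith
      set j : ℝ := (i:ℝ)+1 with hjd
      have hl0 : 0 ≤ Real.log j := Real.log_nonneg hj1
      have hjβ0 : (0:ℝ) < j^β := Real.rpow_pos_of_pos hj0 β
      have hj2β : j^(-(2*β)) = ((j^β)^2)⁻¹ := by
        rw [show -(2*β) = β*(-2) by ring, Real.rpow_mul hj0.le,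
          Real.rpow_neg hjβ0.le, show ((2:ℝ)) = ((2:ℕ):ℝ) by norm_num, Real.rpow_natCast]
      have hstep : n^2 * j^β * Real.log j / ((j^β + n)^2) ≤ n^2 * Real.log j / j^β := by
        have h1 : n^2 * j^β * Real.log j / ((j^β + n)^2)
            ≤ n^2 * j^β * Real.log j / ((j^β)^2) := by
          apply div_le_div_of_nonneg_left (by positivity) (by positivity)
          nlinarith
        refine h1.trans_eq ?_
        field_simp
      have hg_le : g i ≤ n^4 * (Real.log j)^2 * j^(-(2*β)) := by
        have ha0 : 0 ≤ n^2 * j^β * Real.log j / ((j^β + n)^2) := by positivity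
        calc g i ≤ (n^2 * Real.log j / j^β)^2 := by
              rw [hgd]
              exact pow_le_pow_left₀ ha0 hstep 2
          _ = n^4 * (Real.log j)^2 * j^(-(2*β)) := by
            rw [hj2β]
            field_simp
      have hu : (1:ℝ) ≤ j/M := by rw [le_div_iff₀ hM0]; nlinarith
      have hls : (Real.log (j/M))^2 ≤ 16*(j/M)^(β/2)/β^2 := by
        have h := aux_log_sq hu (show (0:ℝ) < β/4 by positivity)
        refine h.trans_eq ?_
        rw [show 2*(β/4) = β/2 by ring]
        field_simp
        ring
      have hlogsplit : Real.log j = Real.log M + Real.log (j/M) := by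
        rw [Real.log_div (ne_of_gt hj0) (ne_of_gt hM0)]
        ring
      have hlog2 : (Real.log j)^2 ≤ 2*(Real.log M)^2 + 32*(j/M)^(β/2)/β^2 := by
        rw [hlogsplit]
        have h2b : 2 * (Real.log (j/M))^2 ≤ 32*(j/M)^(β/2)/β^2 := by
          rw [show (32:ℝ)*(j/M)^(β/2)/β^2 = 2*(16*(j/M)^(β/2)/β^2) by ring]
          linarith
        nlinarith [sq_nonneg (Real.log M - Real.log (j/M)), h2b]
      have hjdiv : (j/M)^(β/2) = j^(β/2) / M^(β/2) := Real.div_rpow hj0.le hM0.le (β/2)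
      have hjcomb : j^(β/2) * j^(-(2*β)) = j^(-(3*β/2)) := by
        rw [← Real.rpow_add hj0]
        ring_nf
      have hjneg0 : (0:ℝ) ≤ j^(-(2*β)) := Real.rpow_nonneg hj0.le _
      calc g i ≤ n^4 * (Real.log j)^2 * j^(-(2*β)) := hg_le
        _ ≤ n^4 * (2*(Real.log M)^2 + 32*(j/M)^(β/2)/β^2) * j^(-(2*β)) := by
            apply mul_le_mul_of_nonneg_right _ hjneg0
            apply mul_le_mul_of_nonneg_left hlog2 (by positivity)
        _ = 2*n^4*(Real.log M)^2 * j^(-(2*β)) + c2 * (j^(β/2) * j^(-(2*β))) := by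
            rw [hjdiv, hc2d]
            field_simp
        _ = 2*n^4*(Real.log M)^2 * j^(-(2*β)) + c2 * j^(-(3*β/2)) := by rw [hjcomb]
    -- sum the pointwise bound and reindex
    set S2 := S.filter (fun i : ℕ => ¬((i:ℝ)+1) ≤ M) with hS2d
    set T := S2.image (fun i => i+1) with hTd
    have hTmem : ∀ j ∈ T, K+1 ≤ j := by
      intro j hj
      rw [hTd, Finset.mem_image] at hj
      obtain ⟨i, hi, rfl⟩ := hj
      rw [hS2d, Finset.mem_filter] at hi
      have h2 : M < (i:ℝ)+1 := by
        have := hi.2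
        push_neg at this
        exact this
      have : (K:ℝ) < ((i+1:ℕ):ℝ) := by push_cast; linarith
      have := Nat.cast_lt.mp this
      omega
    have hre : ∀ e : ℝ, ∑ i ∈ S2, ((i:ℝ)+1)^e = ∑ j ∈ T, (j:ℝ)^e := by
      intro e
      rw [hTd, Finset.sum_image (by intro a _ b _ h; simp only at h; omega)]
      apply Finset.sum_congr rfl
      intro i _
      push_cast
      ring_nf
    have hS1 : ∑ j ∈ T, ((j:ℝ))^(-(2*β)) ≤ 16 * M / n^2 := by
      have h := aux_tail_T (show (1:ℝ) < 2*β by linarith) hK1 T hTmem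
      refine h.trans ?_
      have h1 : ((K:ℝ)+1)^(-(2*β)) ≤ M^(-(2*β)) :=
        Real.rpow_le_rpow_of_nonpos hM0 hMK.le (by linarith)
      have h2 : 1 + (K:ℝ)/(2*β-1) ≤ 2*M := by
        have h3 : (K:ℝ)/(2*β-1) ≤ (K:ℝ) := by
          apply div_le_self (by positivity) (by linarith)
        linarith
      calc 8 * ((K:ℝ)+1)^(-(2*β)) * (1 + (K:ℝ)/(2*β-1))
          ≤ 8 * M^(-(2*β)) * (2*M) := by
            apply mul_le_mul _ h2 ?_ (by positivity)
            swap
            · have := div_nonneg (Nat.cast_nonneg (α:=ℝ) K) (by linarith : (0:ℝ) ≤ 2*β-1)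
              linarith
            apply mul_le_mul_of_nonneg_left h1 (by norm_num)
        _ = 16 * M / n^2 := by
            rw [hMinv]
            field_simp
            ring
    have hS2b : ∑ j ∈ T, ((j:ℝ))^(-(3*β/2)) ≤ 24 * M * M^(-(3*β/2)) := by
      have h := aux_tail_T (show (1:ℝ) < 3*β/2 by linarith) hK1 T hTmem
      refine h.trans ?_
      have h1 : ((K:ℝ)+1)^(-(3*β/2)) ≤ M^(-(3*β/2)) :=
        Real.rpow_le_rpow_of_nonpos hM0 hMK.le (by linarith)
      have h2 : 1 + (K:ℝ)/(3*β/2-1) ≤ 3*M := by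
        have h3 : (K:ℝ)/(3*β/2-1) ≤ (K:ℝ)*2 := by
          rw [div_le_iff₀ (by linarith)]
          nlinarith [Nat.cast_nonneg (α := ℝ) K]
        linarith
      calc 8 * ((K:ℝ)+1)^(-(3*β/2)) * (1 + (K:ℝ)/(3*β/2-1))
          ≤ 8 * M^(-(3*β/2)) * (3*M) := by
            apply mul_le_mul _ h2 ?_ (by positivity)
            swap
            · have := div_nonneg (Nat.cast_nonneg (α:=ℝ) K) (by linarith : (0:ℝ) ≤ 3*β/2-1)
              linarith
            apply mul_le_mul_of_nonneg_left h1 (by norm_num)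
        _ = 24 * M * M^(-(3*β/2)) := by ring
    have hMcomb : M^(-(β/2)) * M^(-(3*β/2)) = (n^2)⁻¹ := by
      rw [← Real.rpow_add hM0, ← hMinv]
      ring_nf
    calc ∑ i ∈ S2, g i
        ≤ ∑ i ∈ S2, (2*n^4*(Real.log M)^2 * ((i:ℝ)+1)^(-(2*β)) + c2 * ((i:ℝ)+1)^(-(3*β/2))) :=
          Finset.sum_le_sum hpt
      _ = 2*n^4*(Real.log M)^2 * (∑ j ∈ T, ((j:ℝ))^(-(2*β)))
          + c2 * (∑ j ∈ T, ((j:ℝ))^(-(3*β/2))) := by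
          rw [Finset.sum_add_distrib, ← Finset.mul_sum, ← Finset.mul_sum, hre, hre]
      _ ≤ 2*n^4*(Real.log M)^2 * (16 * M / n^2) + c2 * (24 * M * M^(-(3*β/2))) := by
          apply add_le_add
          · apply mul_le_mul_of_nonneg_left hS1 (by positivity)
          · apply mul_le_mul_of_nonneg_left hS2b hc20
      _ ≤ 800 * (M * (n^2 * (Real.log n)^2 / β^2)) := by
          rw [hlogM, hc2d]
          have e1 : 2*n^4*((Real.log n)/β)^2 * (16 * M / n^2)
              = 32 * (M * (n^2 * (Real.log n)^2 / β^2)) := by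
            field_simp
            ring
          have e2 : 32*n^4/(β^2 * M^(β/2)) * (24 * M * M^(-(3*β/2)))
              = 768 * (M * (n^2 / β^2)) := by
            rw [show (32:ℝ)*n^4/(β^2 * M^(β/2)) * (24 * M * M^(-(3*β/2)))
                = 768*n^4*M*((M^(β/2))⁻¹*M^(-(3*β/2)))/β^2 by field_simp; ring]
            rw [← Real.rpow_neg hM0.le, hMcomb]
            field_simp
          rw [e1, e2]
          have h3 : (32:ℝ) * (M * (n^2 * (Real.log n)^2 / β^2))
              + 768 * (M * (n^2 / β^2)) ≤ 32 * (M * (n^2 * (Real.log n)^2 / β^2))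
              + 768 * (M * (n^2 * (Real.log n)^2 / β^2)) := by
            apply add_le_add_right
            apply mul_le_mul_of_nonneg_left _ (by norm_num)
            apply mul_le_mul_of_nonneg_left _ hM0.le
            apply div_le_div_of_nonneg_right _ (by positivity)
            have hL2 : 1 ≤ (Real.log n)^2 := by nlinarith [hlogn]
            nlinarith [mul_le_mul_of_nonneg_left hL2 (sq_nonneg n)]
          linarith
  have efin : 801 * n^2 * M * (Real.log n)^2 / β^2
      = M * (n^2 * (Real.log n)^2 / β^2) + 800 * (M * (n^2 * (Real.log n)^2 / β^2)) := by
    ring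
  linarith

/-- Lemma 5.2: variance bound for the normalized score process.
Since the Y_i are independent with Y_i = i^{−p} μ_i + n^{−1/2} Z_i, Z_i standard
normal, one has Var(Y_i²) = 2/n² + 4 i^{−2p} μ_i²/n, and the variance of
(1+2α+2p) M_n(α) / n^{1/(1+2α+2p)} equals the explicit series written below; it is
bounded by a universal constant times n^{−1/(1+2α+2p)} (log n)² (1 + h_n(α)),
uniformly in α > 0 and μ ∈ ℓ². -/
theorem stmt_14 :
    ∃ C > (0 : ℝ), ∀ (p : ℝ), 0 ≤ p → ∀ (μ : ℕ → ℝ),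
      Summable (fun i : ℕ => (μ (i + 1)) ^ 2) →
      ∀ n : ℝ, 3 ≤ n → ∀ α > (0 : ℝ),
        ((1 + 2 * α + 2 * p) / n ^ (1 / (1 + 2 * α + 2 * p))) ^ 2 *
          ∑' i : ℕ,
            (n ^ 2 * ((i : ℝ) + 1) ^ (1 + 2 * α + 2 * p) * Real.log ((i : ℝ) + 1) /
                ((((i : ℝ) + 1) ^ (1 + 2 * α + 2 * p) + n) ^ 2)) ^ 2 *
              (2 / n ^ 2 + 4 * ((i : ℝ) + 1) ^ (-2 * p) * (μ (i + 1)) ^ 2 / n)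
        ≤ C * n ^ (-(1 : ℝ) / (1 + 2 * α + 2 * p)) * Real.log n ^ 2 *
            (1 + (1 + 2 * α + 2 * p) / (n ^ (1 / (1 + 2 * α + 2 * p)) * Real.log n) *
              ∑' i : ℕ, n ^ 2 * ((i : ℝ) + 1) ^ (1 + 2 * α) * (μ (i + 1)) ^ 2 *
                Real.log ((i : ℝ) + 1) /
                ((((i : ℝ) + 1) ^ (1 + 2 * α + 2 * p) + n) ^ 2)) := by
  refine ⟨1602, by norm_num, ?_⟩
  intro p hp μ hμ n hn α hα
  classical
  have hn0 : (0:ℝ) < n := by linarith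
  have hlogn : (1:ℝ) ≤ Real.log n := by
    rw [Real.le_log_iff_exp_le hn0]
    calc Real.exp 1 ≤ 2.7182818286 := Real.exp_one_lt_d9.le
      _ ≤ n := by linarith
  have hlogn0 : (0:ℝ) < Real.log n := by linarith
  set β := 1 + 2*α + 2*p with hβd
  have hβ : (1:ℝ) < β := by rw [hβd]; linarith
  have hβ0 : (0:ℝ) < β := by linarith
  set M := n ^ (1/β) with hMd
  have hM1 : (1:ℝ) ≤ M := Real.one_le_rpow (by linarith) (by positivity)
  have hM0 : (0:ℝ) < M := by linarith
  have hj1 : ∀ i : ℕ, (1:ℝ) ≤ (i:ℝ)+1 := fun i => by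
    have : (0:ℝ) ≤ (i:ℝ) := Nat.cast_nonneg i
    linarith
  have hj0 : ∀ i : ℕ, (0:ℝ) < (i:ℝ)+1 := fun i => lt_of_lt_of_le one_pos (hj1 i)
  -- b facts
  have hb_nonneg : ∀ i : ℕ, 0 ≤ n ^ 2 * ((i:ℝ)+1) ^ (1 + 2*α) * (μ (i+1))^2 *
      Real.log ((i:ℝ)+1) / ((((i:ℝ)+1) ^ β + n) ^ 2) := by
    intro i
    have := Real.log_nonneg (hj1 i)
    positivity
  have hb_le : ∀ i : ℕ, n ^ 2 * ((i:ℝ)+1) ^ (1 + 2*α) * (μ (i+1))^2 *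
      Real.log ((i:ℝ)+1) / ((((i:ℝ)+1) ^ β + n) ^ 2) ≤ n^2 * (μ (i+1))^2 := by
    intro i
    have hl0 : 0 ≤ Real.log ((i:ℝ)+1) := Real.log_nonneg (hj1 i)
    have hlj : Real.log ((i:ℝ)+1) ≤ (i:ℝ)+1 := by
      have := Real.log_le_sub_one_of_pos (hj0 i)
      linarith
    have hkey : ((i:ℝ)+1) ^ (1 + 2*α) * Real.log ((i:ℝ)+1) ≤ (((i:ℝ)+1) ^ β + n) ^ 2 := by
      have h1 : ((i:ℝ)+1) ^ (1 + 2*α) * Real.log ((i:ℝ)+1)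
          ≤ ((i:ℝ)+1) ^ (1 + 2*α) * ((i:ℝ)+1) ^ (1 + 2*α + 4*p) := by
        apply mul_le_mul_of_nonneg_left _ (Real.rpow_nonneg (hj0 i).le _)
        calc Real.log ((i:ℝ)+1) ≤ (i:ℝ)+1 := hlj
          _ = ((i:ℝ)+1) ^ (1:ℝ) := (Real.rpow_one _).symm
          _ ≤ ((i:ℝ)+1) ^ (1 + 2*α + 4*p) :=
              Real.rpow_le_rpow_of_exponent_le (hj1 i) (by linarith)
      have h2 : ((i:ℝ)+1) ^ (1 + 2*α) * ((i:ℝ)+1) ^ (1 + 2*α + 4*p)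
          = (((i:ℝ)+1) ^ β) ^ 2 := by
        calc ((i:ℝ)+1) ^ (1 + 2*α) * ((i:ℝ)+1) ^ (1 + 2*α + 4*p)
            = ((i:ℝ)+1) ^ ((1 + 2*α) + (1 + 2*α + 4*p)) :=
              (Real.rpow_add (hj0 i) _ _).symm
          _ = ((i:ℝ)+1) ^ (β * ((2:ℕ):ℝ)) := by
              congr 1
              rw [hβd]
              push_cast
              ring
          _ = (((i:ℝ)+1) ^ β) ^ 2 := by
              rw [Real.rpow_mul (hj0 i).le, Real.rpow_natCast]
      have h3 : (((i:ℝ)+1) ^ β) ^ 2 ≤ ((((i:ℝ)+1) ^ β) + n) ^ 2 := by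
        have h4 : (0:ℝ) ≤ ((i:ℝ)+1) ^ β := Real.rpow_nonneg (hj0 i).le _
        nlinarith
      linarith [h1, h2 ▸ h1]
    rw [div_le_iff₀ (by positivity)]
    calc n ^ 2 * ((i:ℝ)+1) ^ (1 + 2*α) * (μ (i+1))^2 * Real.log ((i:ℝ)+1)
        = (n^2 * (μ (i+1))^2) * (((i:ℝ)+1) ^ (1 + 2*α) * Real.log ((i:ℝ)+1)) := by ring
      _ ≤ (n^2 * (μ (i+1))^2) * ((((i:ℝ)+1) ^ β + n) ^ 2) := by
          apply mul_le_mul_of_nonneg_left hkey (by positivity)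
  have hb_summable : Summable (fun i : ℕ => n ^ 2 * ((i:ℝ)+1) ^ (1 + 2*α) * (μ (i+1))^2 *
      Real.log ((i:ℝ)+1) / ((((i:ℝ)+1) ^ β + n) ^ 2)) :=
    Summable.of_nonneg_of_le hb_nonneg hb_le (hμ.mul_left (n^2))
  set TB := ∑' i : ℕ, n ^ 2 * ((i:ℝ)+1) ^ (1 + 2*α) * (μ (i+1))^2 *
      Real.log ((i:ℝ)+1) / ((((i:ℝ)+1) ^ β + n) ^ 2) with hTBd
  have hTB0 : 0 ≤ TB := tsum_nonneg hb_nonneg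
  set D := 1602 * M * (Real.log n)^2 / β^2 + (8 * Real.log n / β) * TB with hDd
  have hD0 : 0 ≤ D := by
    rw [hDd]
    positivity
  have key : ∑' i : ℕ,
      (n ^ 2 * ((i : ℝ) + 1) ^ β * Real.log ((i : ℝ) + 1) /
          ((((i : ℝ) + 1) ^ β + n) ^ 2)) ^ 2 *
        (2 / n ^ 2 + 4 * ((i : ℝ) + 1) ^ (-2 * p) * (μ (i + 1)) ^ 2 / n) ≤ D := by
    apply tsum_le_of_sum_le' hD0
    intro s
    have hsplit : ∀ i : ℕ,
        (n ^ 2 * ((i : ℝ) + 1) ^ β * Real.log ((i : ℝ) + 1) /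
            ((((i : ℝ) + 1) ^ β + n) ^ 2)) ^ 2 *
          (2 / n ^ 2 + 4 * ((i : ℝ) + 1) ^ (-2 * p) * (μ (i + 1)) ^ 2 / n)
        = (n ^ 2 * ((i : ℝ) + 1) ^ β * Real.log ((i : ℝ) + 1) /
            ((((i : ℝ) + 1) ^ β + n) ^ 2)) ^ 2 * (2 / n ^ 2)
          + (n ^ 2 * ((i : ℝ) + 1) ^ β * Real.log ((i : ℝ) + 1) /
            ((((i : ℝ) + 1) ^ β + n) ^ 2)) ^ 2 *
              (4 * ((i : ℝ) + 1) ^ (-2 * p) * (μ (i + 1)) ^ 2 / n) := fun i => by ring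
    rw [Finset.sum_congr rfl (fun i _ => hsplit i), Finset.sum_add_distrib]
    have part1 : ∑ i ∈ s, (n ^ 2 * ((i : ℝ) + 1) ^ β * Real.log ((i : ℝ) + 1) /
            ((((i : ℝ) + 1) ^ β + n) ^ 2)) ^ 2 * (2 / n ^ 2)
        ≤ 1602 * M * (Real.log n)^2 / β^2 := by
      rw [← Finset.sum_mul]
      calc (∑ i ∈ s, (n ^ 2 * ((i : ℝ) + 1) ^ β * Real.log ((i : ℝ) + 1) /
            ((((i : ℝ) + 1) ^ β + n) ^ 2)) ^ 2) * (2 / n ^ 2)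
          ≤ (801 * n^2 * n^(1/β) * (Real.log n)^2 / β^2) * (2 / n ^ 2) := by
            apply mul_le_mul_of_nonneg_right (claimA hn hβ s) (by positivity)
        _ = 1602 * M * (Real.log n)^2 / β^2 := by
            rw [← hMd]
            field_simp
            ring
    have part2 : ∑ i ∈ s, (n ^ 2 * ((i : ℝ) + 1) ^ β * Real.log ((i : ℝ) + 1) /
            ((((i : ℝ) + 1) ^ β + n) ^ 2)) ^ 2 *
              (4 * ((i : ℝ) + 1) ^ (-2 * p) * (μ (i + 1)) ^ 2 / n)
        ≤ (8 * Real.log n / β) * TB := by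
      have hpt : ∀ i ∈ s, (n ^ 2 * ((i : ℝ) + 1) ^ β * Real.log ((i : ℝ) + 1) /
            ((((i : ℝ) + 1) ^ β + n) ^ 2)) ^ 2 *
              (4 * ((i : ℝ) + 1) ^ (-2 * p) * (μ (i + 1)) ^ 2 / n)
          ≤ (8 * Real.log n / β) * (n ^ 2 * ((i:ℝ)+1) ^ (1 + 2*α) * (μ (i+1))^2 *
              Real.log ((i:ℝ)+1) / ((((i:ℝ)+1) ^ β + n) ^ 2)) := by
        intro i _
        have hpow : ((i:ℝ)+1)^β * ((i:ℝ)+1)^(-2*p) = ((i:ℝ)+1)^(1+2*α) := by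
          rw [← Real.rpow_add (hj0 i)]
          congr 1
          rw [hβd]
          ring
        have hab : (n ^ 2 * ((i : ℝ) + 1) ^ β * Real.log ((i : ℝ) + 1) /
              ((((i : ℝ) + 1) ^ β + n) ^ 2)) * (((i:ℝ)+1)^(-2*p) * (μ (i+1))^2)
            = n ^ 2 * ((i:ℝ)+1) ^ (1 + 2*α) * (μ (i+1))^2 *
              Real.log ((i:ℝ)+1) / ((((i:ℝ)+1) ^ β + n) ^ 2) := by
          rw [← hpow]
          ring
        have heq : (n ^ 2 * ((i : ℝ) + 1) ^ β * Real.log ((i : ℝ) + 1) /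
              ((((i : ℝ) + 1) ^ β + n) ^ 2)) ^ 2 *
              (4 * ((i : ℝ) + 1) ^ (-2 * p) * (μ (i + 1)) ^ 2 / n)
            = (4/n) * (n ^ 2 * ((i : ℝ) + 1) ^ β * Real.log ((i : ℝ) + 1) /
              ((((i : ℝ) + 1) ^ β + n) ^ 2)) *
                (n ^ 2 * ((i:ℝ)+1) ^ (1 + 2*α) * (μ (i+1))^2 *
                  Real.log ((i:ℝ)+1) / ((((i:ℝ)+1) ^ β + n) ^ 2)) := by
          rw [← hab]
          ring
        rw [heq]
        have hB := claimB hn hβ (hj1 i)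
        calc (4/n) * (n ^ 2 * ((i : ℝ) + 1) ^ β * Real.log ((i : ℝ) + 1) /
              ((((i : ℝ) + 1) ^ β + n) ^ 2)) *
                (n ^ 2 * ((i:ℝ)+1) ^ (1 + 2*α) * (μ (i+1))^2 *
                  Real.log ((i:ℝ)+1) / ((((i:ℝ)+1) ^ β + n) ^ 2))
            ≤ (4/n) * (2 * n * Real.log n / β) *
                (n ^ 2 * ((i:ℝ)+1) ^ (1 + 2*α) * (μ (i+1))^2 *
                  Real.log ((i:ℝ)+1) / ((((i:ℝ)+1) ^ β + n) ^ 2)) := by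
              apply mul_le_mul_of_nonneg_right _ (hb_nonneg i)
              apply mul_le_mul_of_nonneg_left hB (by positivity)
          _ = (8 * Real.log n / β) * (n ^ 2 * ((i:ℝ)+1) ^ (1 + 2*α) * (μ (i+1))^2 *
                  Real.log ((i:ℝ)+1) / ((((i:ℝ)+1) ^ β + n) ^ 2)) := by
              field_simp
              ring
      calc ∑ i ∈ s, (n ^ 2 * ((i : ℝ) + 1) ^ β * Real.log ((i : ℝ) + 1) /
            ((((i : ℝ) + 1) ^ β + n) ^ 2)) ^ 2 *
              (4 * ((i : ℝ) + 1) ^ (-2 * p) * (μ (i + 1)) ^ 2 / n)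
          ≤ ∑ i ∈ s, (8 * Real.log n / β) * (n ^ 2 * ((i:ℝ)+1) ^ (1 + 2*α) * (μ (i+1))^2 *
              Real.log ((i:ℝ)+1) / ((((i:ℝ)+1) ^ β + n) ^ 2)) :=
            Finset.sum_le_sum hpt
        _ = (8 * Real.log n / β) * ∑ i ∈ s, (n ^ 2 * ((i:ℝ)+1) ^ (1 + 2*α) * (μ (i+1))^2 *
              Real.log ((i:ℝ)+1) / ((((i:ℝ)+1) ^ β + n) ^ 2)) := by
            rw [Finset.mul_sum]
        _ ≤ (8 * Real.log n / β) * TB := by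
            apply mul_le_mul_of_nonneg_left _ (by positivity)
            rw [hTBd]
            exact Summable.sum_le_tsum s (fun i _ => hb_nonneg i) hb_summable
    rw [hDd]
    exact add_le_add part1 part2
  have hninv : n ^ (-(1 : ℝ)/β) = M⁻¹ := by
    rw [show (-(1 : ℝ)/β) = -(1/β) by ring, Real.rpow_neg hn0.le, ← hMd]
  calc (β / M) ^ 2 * ∑' i : ℕ,
      (n ^ 2 * ((i : ℝ) + 1) ^ β * Real.log ((i : ℝ) + 1) /
          ((((i : ℝ) + 1) ^ β + n) ^ 2)) ^ 2 *
        (2 / n ^ 2 + 4 * ((i : ℝ) + 1) ^ (-2 * p) * (μ (i + 1)) ^ 2 / n)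
      ≤ (β / M) ^ 2 * D := by
        apply mul_le_mul_of_nonneg_left key (by positivity)
    _ = 1602 * (Real.log n)^2 / M + 8 * β * Real.log n * TB / M^2 := by
        rw [hDd]
        field_simp
    _ ≤ 1602 * (Real.log n)^2 / M + 1602 * β * Real.log n * TB / M^2 := by
        apply add_le_add_right
        apply div_le_div_of_nonneg_right _ (by positivity)
        nlinarith [mul_nonneg (mul_nonneg hβ0.le hlogn0.le) hTB0]
    _ = 1602 * n ^ (-(1 : ℝ)/β) * Real.log n ^ 2 * (1 + β / (M * Real.log n) * TB) := by
        rw [hninv]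
        field_simp
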